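/- For every n ≥ 2 and every subset A of L, if some subset B ⊆ L \ A is uncountable and closed in L with its Euclidean subspace topology (for example, B homeomorphic to the Cantor set), then the space (X, τ(A)) is not Lindelöf. -/
import Mathlib


open Metric Set TopologicalSpace

noncomputable section

/-- The last coordinate `x (n-1)` of a point of `EuclideanSpace ℝ (Fin n)`
(junk value `0` if `n = 0`). -/
def lastCoord (n : ℕ) (x : EuclideanSpace ℝ (Fin n)) : ℝ :=
  if h : 0 < n then x ⟨n - 1, Nat.sub_lt h one_pos⟩ else 0

/-- The closed upper half-space `X = {x : x (n-1) ≥ 0}`. -/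
def HalfSpace (n : ℕ) : Set (EuclideanSpace ℝ (Fin n)) := {x | 0 ≤ lastCoord n x}

/-- The open upper half-space `P = {x : x (n-1) > 0}`. -/
def OpenHalf (n : ℕ) : Set (EuclideanSpace ℝ (Fin n)) := {x | 0 < lastCoord n x}

/-- The boundary hyperplane `L = {x : x (n-1) = 0}`. -/
def Bdry (n : ℕ) : Set (EuclideanSpace ℝ (Fin n)) := {x | lastCoord n x = 0}

/-- The `n`-th standard basis vector `e` (junk value `0` if `n = 0`). -/
def eVec (n : ℕ) : EuclideanSpace ℝ (Fin n) :=
  if h : 0 < n then EuclideanSpace.single ⟨n - 1, Nat.sub_lt h one_pos⟩ (1 : ℝ) else 0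

/-- The tangent ball `B̃(a, ε) = {a} ∪ B(a + ε • e, ε)`. -/
def tangentBall (n : ℕ) (a : EuclideanSpace ℝ (Fin n)) (ε : ℝ) :
    Set (EuclideanSpace ℝ (Fin n)) :=
  {a} ∪ ball (a + ε • eVec n) ε

/-- The generating family for the topology `τ(A)` on `X`:
balls `B(a,ε)` with `a ∈ P`, `0 < ε < a (n-1)`; traces `B(a,ε) ∩ X` with `a ∈ A`, `ε > 0`;
and tangent balls `B̃(a,ε)` with `a ∈ L \ A`, `ε > 0`. -/
def niemGen (n : ℕ) (A : Set (EuclideanSpace ℝ (Fin n))) : Set (Set (HalfSpace n)) :=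
  {s | ∃ a ∈ OpenHalf n, ∃ ε, 0 < ε ∧ ε < lastCoord n a ∧
      s = Subtype.val ⁻¹' ball a ε} ∪
  {s | ∃ a ∈ A, ∃ ε, 0 < ε ∧ s = Subtype.val ⁻¹' ball a ε} ∪
  {s | ∃ a ∈ Bdry n \ A, ∃ ε, 0 < ε ∧ s = Subtype.val ⁻¹' tangentBall n a ε}

/-- The topology `τ(A)` on `X`; `τ(∅)` is the Niemytzki topology `τ_N`. -/
def tau (n : ℕ) (A : Set (EuclideanSpace ℝ (Fin n))) : TopologicalSpace (HalfSpace n) :=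
  generateFrom (niemGen n A)

/-- The inclusion of `L` into `X`. -/
def inclLX (n : ℕ) (x : Bdry n) : HalfSpace n := ⟨x.1, le_of_eq x.2.symm⟩

/-- The subspace topology `τ(A)|_L` on `L` induced from `(X, τ(A))`. -/
def tauL (n : ℕ) (A : Set (EuclideanSpace ℝ (Fin n))) : TopologicalSpace (Bdry n) :=
  TopologicalSpace.induced (inclLX n) (tau n A)

/-- A space is perfect if every closed set is a `Gδ`-set. -/
def IsPerfectSpace (X : Type*) [TopologicalSpace X] : Prop :=
  ∀ s : Set X, IsClosed s → IsGδ s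

/-- An `Fσ`-set: a countable union of closed sets. -/
def IsFsigma {X : Type*} [TopologicalSpace X] (s : Set X) : Prop :=
  ∃ F : ℕ → Set X, (∀ i, IsClosed (F i)) ∧ s = ⋃ i, F i

/-- Countably paracompact: every countable open cover admits a locally finite open refinement. -/
def CountablyParacompact (X : Type*) [TopologicalSpace X] : Prop :=
  ∀ u : ℕ → Set X, (∀ i, IsOpen (u i)) → (⋃ i, u i) = Set.univ →
    ∃ (ι : Type) (v : ι → Set X), (∀ j, IsOpen (v j)) ∧ (⋃ j, v j) = Set.univ ∧
      LocallyFinite v ∧ ∀ j, ∃ i, v j ⊆ u i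

/-- A zero set: the zero locus of a continuous real-valued function. -/
def IsZeroSet {X : Type*} [TopologicalSpace X] (s : Set X) : Prop :=
  ∃ f : X → ℝ, Continuous f ∧ s = f ⁻¹' {0}

/-- `Y` is z-embedded in `X` if every zero set of the subspace `Y`
is the trace on `Y` of a zero set of `X`. -/
def ZEmbedded {X : Type*} [TopologicalSpace X] (Y : Set X) : Prop :=
  ∀ s : Set Y, IsZeroSet s → ∃ Z : Set X, IsZeroSet Z ∧ s = Subtype.val ⁻¹' Z

/-- `Y` is `C*`-embedded in `X` if every bounded continuous real-valued function on the
subspace `Y` extends to a bounded continuous function on `X`. -/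
def CStarEmbedded {X : Type*} [TopologicalSpace X] (Y : Set X) : Prop :=
  ∀ f : Y → ℝ, Continuous f → (∃ M, ∀ y, |f y| ≤ M) →
    ∃ g : X → ℝ, Continuous g ∧ (∃ M, ∀ x, |g x| ≤ M) ∧ ∀ y : Y, g ↑y = f y

section AuxLemmas

open Metric Set TopologicalSpace

variable {n : ℕ}

lemma coord_dist_le (x y : EuclideanSpace ℝ (Fin n)) (i : Fin n) :
    dist (x i) (y i) ≤ dist x y := by
  rw [EuclideanSpace.dist_eq]
  have h : dist (x i) (y i) = Real.sqrt (dist (x i) (y i) ^ 2) := by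
    rw [Real.sqrt_sq dist_nonneg]
  rw [h]
  apply Real.sqrt_le_sqrt
  exact Finset.single_le_sum (f := fun j => dist (x j) (y j) ^ 2)
    (fun j _ => sq_nonneg _) (Finset.mem_univ i)

lemma lastCoord_eq (hn : 0 < n) (x : EuclideanSpace ℝ (Fin n)) :
    lastCoord n x = x ⟨n - 1, Nat.sub_lt hn one_pos⟩ := dif_pos hn

lemma lastCoord_dist (hn : 0 < n) (x y : EuclideanSpace ℝ (Fin n)) :
    |lastCoord n x - lastCoord n y| ≤ dist x y := by
  rw [lastCoord_eq hn, lastCoord_eq hn, ← Real.dist_eq]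
  exact coord_dist_le x y _

lemma eVec_last (hn : 0 < n) : lastCoord n (eVec n) = 1 := by
  rw [lastCoord_eq hn]
  unfold eVec
  rw [dif_pos hn]
  simp [EuclideanSpace.single_apply]

lemma norm_eVec (hn : 0 < n) : ‖eVec n‖ = 1 := by
  unfold eVec
  rw [dif_pos hn]
  simp [EuclideanSpace.norm_single]

lemma lastCoord_add_smul (hn : 0 < n) (a : EuclideanSpace ℝ (Fin n)) (ε : ℝ) :
    lastCoord n (a + ε • eVec n) = lastCoord n a + ε := by
  have h : (a + ε • eVec n) ⟨n - 1, Nat.sub_lt hn one_pos⟩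
      = a ⟨n - 1, Nat.sub_lt hn one_pos⟩ + ε * (eVec n) ⟨n - 1, Nat.sub_lt hn one_pos⟩ := rfl
  rw [lastCoord_eq hn, h, ← lastCoord_eq hn a, ← lastCoord_eq hn (eVec n), eVec_last hn, mul_one]

lemma tangent_pos (hn : 0 < n) {a : EuclideanSpace ℝ (Fin n)} (ha : lastCoord n a = 0)
    {ε : ℝ} {y : EuclideanSpace ℝ (Fin n)} (hy : y ∈ ball (a + ε • eVec n) ε) :
    0 < lastCoord n y := by
  have h1 : |lastCoord n y - lastCoord n (a + ε • eVec n)| ≤ dist y (a + ε • eVec n) :=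
    lastCoord_dist hn _ _
  rw [lastCoord_add_smul hn, ha, zero_add] at h1
  have h2 : dist y (a + ε • eVec n) < ε := mem_ball.mp hy
  have := abs_lt.mp (lt_of_le_of_lt h1 h2)
  linarith [this.1]

lemma tangent_subset_ball (hn : 0 < n) (a : EuclideanSpace ℝ (Fin n)) {ε : ℝ} (hε : 0 < ε) :
    tangentBall n a ε ⊆ ball a (2 * ε) := by
  intro y hy
  rcases hy with hy | hy
  · rw [Set.mem_singleton_iff] at hy
    subst hy
    exact mem_ball_self (by linarith)
  · have hd : dist (a + ε • eVec n) a = ε := by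
      rw [dist_eq_norm, add_sub_cancel_left, norm_smul, norm_eVec hn, mul_one,
        Real.norm_eq_abs, abs_of_pos hε]
    have : dist y a ≤ dist y (a + ε • eVec n) + dist (a + ε • eVec n) a := dist_triangle _ _ _
    rw [hd] at this
    have h2 : dist y (a + ε • eVec n) < ε := mem_ball.mp hy
    rw [mem_ball]
    linarith

end AuxLemmas

end
/-- For every `n ≥ 2` and `A ⊆ L`, if some `B ⊆ L \ A` is uncountable and closed in the
Euclidean topology of `L`, then `(X, τ(A))` is not Lindelöf. -/
theorem tauA_not_lindelof (n : ℕ) (hn : 2 ≤ n)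
    (A : Set (EuclideanSpace ℝ (Fin n))) (hA : A ⊆ Bdry n)
    (B : Set (EuclideanSpace ℝ (Fin n))) (hB : B ⊆ Bdry n \ A)
    (hBu : ¬ B.Countable) (hBc : IsClosed (Subtype.val ⁻¹' B : Set (Bdry n))) :
    ¬ @LindelofSpace (HalfSpace n) (tau n A) := by
  intro hL
  have hn0 : 0 < n := by omega
  classical
  -- the open cover
  let C : Set (HalfSpace n) := (Subtype.val ⁻¹' B)ᶜ
  let U : Option ↥B → Set (HalfSpace n) := fun o =>
    match o with
    | none => C
    | some b => Subtype.val ⁻¹' tangentBall n b.1 1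
  have hgen : ∀ {s : Set (HalfSpace n)}, s ∈ niemGen n A → @IsOpen (HalfSpace n) (tau n A) s :=
    fun h => TopologicalSpace.isOpen_generateFrom_of_mem h
  -- C is open: every point not in B has a basic neighborhood avoiding B
  have hbasic : ∀ x : HalfSpace n, x ∈ C →
      ∃ s, s ∈ niemGen n A ∧ x ∈ s ∧ s ⊆ C := by
    intro x hx
    have hxB : (x : EuclideanSpace ℝ (Fin n)) ∉ B := hx
    rcases lt_or_eq_of_le (show (0:ℝ) ≤ lastCoord n x.1 from x.2) with hpos | hzero
    · -- interior point: small ball stays in the open half, which misses B ⊆ L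
      refine ⟨Subtype.val ⁻¹' ball x.1 (lastCoord n x.1 / 2),
        Or.inl (Or.inl ⟨x.1, hpos, lastCoord n x.1 / 2, by linarith, by linarith, rfl⟩),
        mem_ball_self (by linarith), ?_⟩
      intro z hz
      simp only [Set.mem_preimage] at hz
      intro hzB
      have h0 : lastCoord n z.1 = 0 := (hB hzB).1
      have h1 : |lastCoord n z.1 - lastCoord n x.1| ≤ dist z.1 x.1 := lastCoord_dist hn0 _ _
      rw [h0, zero_sub, abs_neg, abs_of_pos hpos] at h1
      have := mem_ball.mp hz
      linarith
    · -- boundary point not in B: B is Euclidean-closed in L, take a ball missing B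
      have hxL : (x : EuclideanSpace ℝ (Fin n)) ∈ Bdry n := hzero.symm
      set xb : Bdry n := ⟨x.1, hxL⟩
      have hxb : xb ∈ (Subtype.val ⁻¹' B : Set (Bdry n))ᶜ := fun h => hxB h
      obtain ⟨ε, hε, hball⟩ := Metric.isOpen_iff.mp hBc.isOpen_compl xb hxb
      have hmiss : ∀ y, y ∈ ball x.1 ε → y ∉ B := by
        intro y hy hyB
        have hyL : y ∈ Bdry n := (hB hyB).1
        have : (⟨y, hyL⟩ : Bdry n) ∈ ball xb ε := by
          rw [mem_ball, Subtype.dist_eq]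
          exact mem_ball.mp hy
        exact hball this hyB
      by_cases hxA : (x : EuclideanSpace ℝ (Fin n)) ∈ A
      · refine ⟨Subtype.val ⁻¹' ball x.1 ε, Or.inl (Or.inr ⟨x.1, hxA, ε, hε, rfl⟩),
          mem_ball_self hε, ?_⟩
        intro z hz hzB
        exact hmiss z.1 hz hzB
      · refine ⟨Subtype.val ⁻¹' tangentBall n x.1 (ε / 2),
          Or.inr ⟨x.1, ⟨hxL, hxA⟩, ε / 2, by linarith, rfl⟩,
          Or.inl rfl, ?_⟩
        intro z hz hzB
        have hsub : tangentBall n x.1 (ε / 2) ⊆ ball x.1 ε := by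
          have := tangent_subset_ball hn0 x.1 (ε := ε / 2) (by linarith)
          rwa [show 2 * (ε / 2) = ε by ring] at this
        exact hmiss z.1 (hsub hz) hzB
  have hCopen : @IsOpen (HalfSpace n) (tau n A) C := by
    choose s hs hxs hsub using hbasic
    have hCeq : C = ⋃ x : C, s x.1 x.2 := by
      apply Set.Subset.antisymm
      · intro y hy
        exact Set.mem_iUnion.mpr ⟨⟨y, hy⟩, hxs y hy⟩
      · intro y hy
        obtain ⟨x, hx⟩ := Set.mem_iUnion.mp hy
        exact hsub x.1 x.2 hx
    rw [hCeq]
    exact @isOpen_iUnion _ _ (tau n A) _ (fun x => hgen (hs x.1 x.2))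
  have hUopen : ∀ o, @IsOpen (HalfSpace n) (tau n A) (U o) := by
    intro o
    match o with
    | none => exact hCopen
    | some b =>
        exact hgen (Or.inr ⟨b.1, hB b.2, 1, one_pos, rfl⟩)
  have hUcov : (Set.univ : Set (HalfSpace n)) ⊆ ⋃ o, U o := by
    intro x _
    by_cases hx : (x : EuclideanSpace ℝ (Fin n)) ∈ B
    · exact Set.mem_iUnion.mpr ⟨some ⟨x.1, hx⟩, Or.inl rfl⟩
    · exact Set.mem_iUnion.mpr ⟨none, hx⟩
  obtain ⟨t, htc, htcov⟩ :
      ∃ r : Set (Option ↥B), r.Countable ∧ (Set.univ : Set (HalfSpace n)) ⊆ ⋃ i ∈ r, U i := by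
    letI := tau n A
    haveI := hL
    exact isLindelof_univ.elim_countable_subcover U hUopen hUcov
  -- every b ∈ B forces some b ∈ t, so B is countable: contradiction
  apply hBu
  have hBsub : B ⊆ Subtype.val '' {b : ↥B | some b ∈ t} := by
    intro b hb
    have hbL : lastCoord n b = 0 := (hB hb).1
    have hbX : (⟨b, le_of_eq hbL.symm⟩ : HalfSpace n) ∈ ⋃ o ∈ t, U o :=
      htcov (Set.mem_univ _)
    obtain ⟨o, hot, hbo⟩ := Set.mem_iUnion₂.mp hbX
    match o with
    | none => exact absurd hb hbo
    | some b' =>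
        have hb' : b ∈ tangentBall n b'.1 1 := hbo
        rcases hb' with h | h
        · rw [Set.mem_singleton_iff] at h
          exact ⟨b', hot, h.symm⟩
        · exfalso
          have hb'L : lastCoord n b'.1 = 0 := (hB b'.2).1
          have := tangent_pos hn0 hb'L h
          rw [hbL] at this
          exact lt_irrefl _ this
  have hcnt : ({b : ↥B | some b ∈ t}).Countable := by
    have : {b : ↥B | some b ∈ t} = some ⁻¹' t := rfl
    rw [this]
    exact htc.preimage (Option.some_injective _)
  exact (hcnt.image _).mono hBsub
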